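/- For the dynamics φ̇ = −u(t)uᵀ(t)φ with u piecewise continuous, bounded, and persistently exciting (with upper bound β: ∫_t^{t+T}u uᵀ dτ ⪯ βI), the origin φ=0 is exponentially stable in the large: there exist κ>0, ν>0 such that ‖φ(t)‖ ≤ κ‖φ(t₀)‖e^{−ν(t−t₀)} for all initial conditions φ(t₀)∈ℝⁿ. -/

import Mathlib

open RealInnerProductSpace

open MeasureTheory

lemma aux_sq_int {n : ℕ} (u : ℝ → EuclideanSpace ℝ (Fin n)) (t₀ T α : ℝ) (hα : 0 < α)
    (hPElow : ∀ w : EuclideanSpace ℝ (Fin n), ‖w‖ = 1 → ∀ t, t₀ ≤ t →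
      α ≤ ∫ τ in t..(t + T), ⟪u τ, w⟫ ^ 2)
    (v : EuclideanSpace ℝ (Fin n)) (t : ℝ) (ht : t₀ ≤ t) :
    IntervalIntegrable (fun τ => ⟪u τ, v⟫ ^ 2) volume t (t + T) := by
  rcases eq_or_ne v 0 with rfl | hv
  · simp only [inner_zero_right, ne_eq, OfNat.ofNat_ne_zero, not_false_eq_true, zero_pow]
    exact intervalIntegrable_const
  · have hnv : ‖v‖ ≠ 0 := norm_ne_zero_iff.mpr hv
    set w : EuclideanSpace ℝ (Fin n) := ‖v‖⁻¹ • v with hwdef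
    have hw : ‖w‖ = 1 := by
      rw [hwdef, norm_smul, norm_inv, norm_norm, inv_mul_cancel₀ hnv]
    have hI : IntervalIntegrable (fun τ => ⟪u τ, w⟫ ^ 2) volume t (t + T) := by
      by_contra h
      have h0 := intervalIntegral.integral_undef h
      have := hPElow w hw t ht
      rw [h0] at this
      linarith
    have := hI.const_mul (‖v‖ ^ 2)
    apply this.congr
    intro τ _; dsimp only
    rw [hwdef, real_inner_smul_right]
    field_simp
lemma aux_prod_int {n : ℕ} (u : ℝ → EuclideanSpace ℝ (Fin n)) (t₀ T α : ℝ) (hα : 0 < α)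
    (hPElow : ∀ w : EuclideanSpace ℝ (Fin n), ‖w‖ = 1 → ∀ t, t₀ ≤ t →
      α ≤ ∫ τ in t..(t + T), ⟪u τ, w⟫ ^ 2)
    (v w : EuclideanSpace ℝ (Fin n)) (t : ℝ) (ht : t₀ ≤ t) :
    IntervalIntegrable (fun τ => ⟪u τ, v⟫ * ⟪u τ, w⟫) volume t (t + T) := by
  have h1 := aux_sq_int u t₀ T α hα hPElow (v + w) t ht
  have h2 := aux_sq_int u t₀ T α hα hPElow v t ht
  have h3 := aux_sq_int u t₀ T α hα hPElow w t ht
  have := ((h1.sub h2).sub h3).div_const 2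
  apply this.congr
  intro τ _; dsimp only
  simp only [inner_add_right]
  ring
lemma aux_mix_int {n : ℕ} (u : ℝ → EuclideanSpace ℝ (Fin n)) (t₀ T α : ℝ) (hα : 0 < α)
    (hPElow : ∀ w : EuclideanSpace ℝ (Fin n), ‖w‖ = 1 → ∀ t, t₀ ≤ t →
      α ≤ ∫ τ in t..(t + T), ⟪u τ, w⟫ ^ 2)
    (φ ψ : ℝ → EuclideanSpace ℝ (Fin n)) (t : ℝ) (ht : t₀ ≤ t)
    (hφ : ContinuousOn φ (Set.uIcc t (t + T))) (hψ : ContinuousOn ψ (Set.uIcc t (t + T))) :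
    IntervalIntegrable (fun τ => ⟪u τ, φ τ⟫ * ⟪u τ, ψ τ⟫) volume t (t + T) := by
  set F : Fin n → Fin n → ℝ → ℝ := fun i j τ => (φ τ i * ψ τ j) * (u τ i * u τ j) with hF
  have hFint : ∀ i j : Fin n, IntervalIntegrable (F i j) volume t (t + T) := by
    intro i j
    have hint : IntervalIntegrable (fun τ => u τ i * u τ j) volume t (t + T) := by
      have := aux_prod_int u t₀ T α hα hPElow (EuclideanSpace.single i 1)
        (EuclideanSpace.single j 1) t ht
      apply this.congr
      intro τ _; dsimp only
      simp [EuclideanSpace.inner_single_right]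
    apply hint.continuousOn_mul
    exact ((EuclideanSpace.proj i).continuous.comp_continuousOn hφ).mul
      ((EuclideanSpace.proj j).continuous.comp_continuousOn hψ)
  have hsum : IntervalIntegrable (∑ i : Fin n, ∑ j : Fin n, F i j) volume t (t + T) :=
    IntervalIntegrable.sum _ (fun i _ => IntervalIntegrable.sum _ (fun j _ => hFint i j))
  apply hsum.congr
  intro τ _; dsimp only
  have : (∑ i : Fin n, ∑ j : Fin n, F i j) τ = ∑ i : Fin n, ∑ j : Fin n, F i j τ := by
    simp [Finset.sum_apply]
  rw [this, hF]
  rw [PiLp.inner_apply, PiLp.inner_apply, Finset.sum_mul_sum]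
  simp only [RCLike.inner_apply, conj_trivial]
  exact Finset.sum_congr rfl fun i _ => Finset.sum_congr rfl fun j _ => by ring
-- displacement bound
lemma aux_disp {n : ℕ} (u : ℝ → EuclideanSpace ℝ (Fin n)) (t₀ T α umax : ℝ)
    (hT : 0 < T) (hα : 0 < α) (humax : 0 < umax)
    (hbound : ∀ t, t₀ ≤ t → ‖u t‖ ≤ umax)
    (hPElow : ∀ w : EuclideanSpace ℝ (Fin n), ‖w‖ = 1 → ∀ t, t₀ ≤ t →
      α ≤ ∫ τ in t..(t + T), ⟪u τ, w⟫ ^ 2)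
    (φ : ℝ → EuclideanSpace ℝ (Fin n))
    (hφ : ∀ t, t₀ ≤ t → HasDerivAt φ (-(⟪u t, φ t⟫ • u t)) t)
    (t : ℝ) (ht : t₀ ≤ t) (τ : ℝ) (hτ : τ ∈ Set.Icc t (t + T)) (ε : ℝ) (hε : 0 < ε) :
    ‖φ τ - φ t‖ ≤ umax * (T * ε + (∫ s in t..(t + T), ⟪u s, φ s⟫ ^ 2) / ε) / 2 := by
  set S := ∫ s in t..(t + T), ⟪u s, φ s⟫ ^ 2 with hSdef
  obtain ⟨htτ, hτT⟩ := hτ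
  have hIci : Set.uIcc t (t + T) ⊆ Set.Ici t₀ := by
    rw [Set.uIcc_of_le (by linarith)]
    intro s hs; exact le_trans ht hs.1
  have hφc : ContinuousOn φ (Set.uIcc t (t + T)) := fun s hs =>
    ((hφ s (hIci hs)).continuousAt).continuousWithinAt
  -- q² is integrable on the window and subwindows
  have hq2 : IntervalIntegrable (fun s => ⟪u s, φ s⟫ ^ 2) volume t (t + T) := by
    have := aux_mix_int u t₀ T α hα hPElow φ φ t ht hφc hφc
    apply this.congr
    intro s _; dsimp only; rw [sq]
  have hS0 : 0 ≤ S := by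
    rw [hSdef]
    apply intervalIntegral.integral_nonneg (by linarith)
    intro s _; positivity
  have hsub1 : Set.uIcc t τ ⊆ Set.uIcc t (t + T) :=
    Set.uIcc_subset_uIcc (by simp) (by rw [Set.uIcc_of_le (by linarith)]; exact ⟨htτ, hτT⟩)
  have hsub2 : Set.uIcc τ (t + T) ⊆ Set.uIcc t (t + T) :=
    Set.uIcc_subset_uIcc (by rw [Set.uIcc_of_le (by linarith)]; exact ⟨htτ, hτT⟩) (by simp [Set.right_mem_uIcc])
  have hq2a : IntervalIntegrable (fun s => ⟪u s, φ s⟫ ^ 2) volume t τ := hq2.mono_set hsub1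
  have hq2b : IntervalIntegrable (fun s => ⟪u s, φ s⟫ ^ 2) volume τ (t + T) := hq2.mono_set hsub2
  -- partial integral of q² bounded by S
  have hpart : (∫ s in t..τ, ⟪u s, φ s⟫ ^ 2) ≤ S := by
    have hadd := intervalIntegral.integral_add_adjacent_intervals hq2a hq2b
    have h2 : 0 ≤ ∫ s in τ..(t + T), ⟪u s, φ s⟫ ^ 2 := by
      apply intervalIntegral.integral_nonneg (by linarith)
      intro s _; positivity
    rw [hSdef]; linarith [hadd]
  rcases eq_or_ne (φ τ) (φ t) with heq | hne
  · rw [heq, sub_self, norm_zero]; positivity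
  · set d := φ τ - φ t with hd
    have hdne : d ≠ 0 := sub_ne_zero_of_ne hne
    have hdn : ‖d‖ ≠ 0 := norm_ne_zero_iff.mpr hdne
    set w : EuclideanSpace ℝ (Fin n) := ‖d‖⁻¹ • d with hw
    -- FTC for s ↦ ⟪φ s, w⟫
    have hderiv : ∀ s ∈ Set.uIcc t τ,
        HasDerivAt (fun s => ⟪φ s, w⟫) (-(⟪u s, φ s⟫ * ⟪u s, w⟫)) s := by
      intro s hs
      have h1 := (hφ s (hIci (hsub1 hs))).inner ℝ (hasDerivAt_const s w)
      have heq : ⟪φ s, (0 : EuclideanSpace ℝ (Fin n))⟫ + ⟪-(⟪u s, φ s⟫ • u s), w⟫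
          = -(⟪u s, φ s⟫ * ⟪u s, w⟫) := by
        rw [inner_zero_right, inner_neg_left, real_inner_smul_left]; ring
      rw [heq] at h1
      exact h1
    have hint : IntervalIntegrable (fun s => -(⟪u s, φ s⟫ * ⟪u s, w⟫)) volume t τ := by
      have := aux_mix_int u t₀ T α hα hPElow φ (fun _ => w) t ht hφc continuousOn_const
      exact (this.mono_set hsub1).neg
    have hFTC := intervalIntegral.integral_eq_sub_of_hasDerivAt hderiv hint
    have hnorm : ‖d‖ = ∫ s in t..τ, -(⟪u s, φ s⟫ * ⟪u s, w⟫) := by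
      rw [hFTC]
      have : ⟪φ τ, w⟫ - ⟪φ t, w⟫ = ⟪d, w⟫ := by rw [hd, inner_sub_left]
      rw [this, hw, real_inner_smul_right, real_inner_self_eq_norm_sq]
      field_simp
    -- bound the integral
    have hmono : (∫ s in t..τ, -(⟪u s, φ s⟫ * ⟪u s, w⟫)) ≤
        ∫ s in t..τ, (umax * ε / 2 + umax / (2 * ε) * ⟪u s, φ s⟫ ^ 2) := by
      apply intervalIntegral.integral_mono_on htτ hint
      · exact (intervalIntegrable_const).add ((hq2a).const_mul _)
      · intro s hs
        have hst₀ : t₀ ≤ s := le_trans ht hs.1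
        have hw1 : ‖w‖ = 1 := by
          rw [hw, norm_smul, norm_inv, norm_norm, inv_mul_cancel₀ hdn]
        have huw : |⟪u s, w⟫| ≤ umax := by
          calc |⟪u s, w⟫| ≤ ‖u s‖ * ‖w‖ := abs_real_inner_le_norm _ _
            _ = ‖u s‖ := by rw [hw1, mul_one]
            _ ≤ umax := hbound s hst₀
        have habs : -(⟪u s, φ s⟫ * ⟪u s, w⟫) ≤ |⟪u s, φ s⟫| * umax := by
          calc -(⟪u s, φ s⟫ * ⟪u s, w⟫) ≤ |⟪u s, φ s⟫ * ⟪u s, w⟫| := neg_le_abs _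
            _ = |⟪u s, φ s⟫| * |⟪u s, w⟫| := abs_mul _ _
            _ ≤ |⟪u s, φ s⟫| * umax := by
                apply mul_le_mul_of_nonneg_left huw (abs_nonneg _)
        have hAM : |⟪u s, φ s⟫| * umax ≤ umax * ε / 2 + umax / (2 * ε) * ⟪u s, φ s⟫ ^ 2 := by
          have h1 : 2 * ε * |⟪u s, φ s⟫| ≤ ε ^ 2 + ⟪u s, φ s⟫ ^ 2 := by
            nlinarith [sq_nonneg (|⟪u s, φ s⟫| - ε), sq_abs ⟪u s, φ s⟫]
          have h2 : |⟪u s, φ s⟫| ≤ (ε + ⟪u s, φ s⟫ ^ 2 / ε) / 2 := by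
            rw [le_div_iff₀ (by norm_num : (0:ℝ) < 2), ← sub_nonneg]
            have heq2 : ε + ⟪u s, φ s⟫ ^ 2 / ε - |⟪u s, φ s⟫| * 2
                = (ε ^ 2 + ⟪u s, φ s⟫ ^ 2 - 2 * ε * |⟪u s, φ s⟫|) / ε := by
              field_simp
            rw [heq2]
            apply div_nonneg _ hε.le
            linarith
          calc |⟪u s, φ s⟫| * umax ≤ ((ε + ⟪u s, φ s⟫ ^ 2 / ε) / 2) * umax := by
                apply mul_le_mul_of_nonneg_right h2 humax.le
            _ = umax * ε / 2 + umax / (2 * ε) * ⟪u s, φ s⟫ ^ 2 := by field_simp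
        linarith
    have hval : (∫ s in t..τ, (umax * ε / 2 + umax / (2 * ε) * ⟪u s, φ s⟫ ^ 2))
        = umax * ε / 2 * (τ - t) + umax / (2 * ε) * ∫ s in t..τ, ⟪u s, φ s⟫ ^ 2 := by
      rw [intervalIntegral.integral_add intervalIntegrable_const ((hq2a).const_mul _),
        intervalIntegral.integral_const, intervalIntegral.integral_const_mul]
      simp [smul_eq_mul]; ring
    have hfinal : umax * ε / 2 * (τ - t) + umax / (2 * ε) * (∫ s in t..τ, ⟪u s, φ s⟫ ^ 2)
        ≤ umax * (T * ε + S / ε) / 2 := by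
      have h1 : τ - t ≤ T := by linarith
      have h2 : umax * ε / 2 * (τ - t) ≤ umax * ε / 2 * T := by
        apply mul_le_mul_of_nonneg_left h1 (by positivity)
      have h3 : umax / (2 * ε) * (∫ s in t..τ, ⟪u s, φ s⟫ ^ 2) ≤ umax / (2 * ε) * S := by
        apply mul_le_mul_of_nonneg_left hpart (by positivity)
      have : umax * ε / 2 * T + umax / (2 * ε) * S = umax * (T * ε + S / ε) / 2 := by
        field_simp
      linarith
    rw [hd] at hnorm ⊢
    rw [hnorm]
    linarith [hmono, hval.le, hfinal]
lemma aux_window {n : ℕ} (u : ℝ → EuclideanSpace ℝ (Fin n)) (t₀ T α umax : ℝ)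
    (hT : 0 < T) (hα : 0 < α) (humax : 0 < umax)
    (hbound : ∀ t, t₀ ≤ t → ‖u t‖ ≤ umax)
    (hPElow : ∀ w : EuclideanSpace ℝ (Fin n), ‖w‖ = 1 → ∀ t, t₀ ≤ t →
      α ≤ ∫ τ in t..(t + T), ⟪u τ, w⟫ ^ 2)
    (φ : ℝ → EuclideanSpace ℝ (Fin n))
    (hφ : ∀ t, t₀ ≤ t → HasDerivAt φ (-(⟪u t, φ t⟫ • u t)) t)
    (t : ℝ) (ht : t₀ ≤ t) :
    α * ‖φ t‖ ^ 2 ≤ 2 * (1 + umax ^ 4 * T ^ 2) * ∫ s in t..(t + T), ⟪u s, φ s⟫ ^ 2 := by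
  set S := ∫ s in t..(t + T), ⟪u s, φ s⟫ ^ 2 with hSdef
  have hIci : Set.uIcc t (t + T) ⊆ Set.Ici t₀ := by
    rw [Set.uIcc_of_le (by linarith)]
    intro s hs; exact le_trans ht hs.1
  have hφc : ContinuousOn φ (Set.uIcc t (t + T)) := fun s hs =>
    ((hφ s (hIci hs)).continuousAt).continuousWithinAt
  have hq2 : IntervalIntegrable (fun s => ⟪u s, φ s⟫ ^ 2) volume t (t + T) := by
    have := aux_mix_int u t₀ T α hα hPElow φ φ t ht hφc hφc
    apply this.congr
    intro s _; dsimp only; rw [sq]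
  have hS0 : 0 ≤ S := by
    rw [hSdef]
    apply intervalIntegral.integral_nonneg (by linarith)
    intro s _; positivity
  -- parametric estimate
  have key : ∀ ε : ℝ, 0 < ε →
      α * ‖φ t‖ ^ 2 ≤ 2 * S + 2 * T * (umax ^ 2 * (T * ε + S / ε) / 2) ^ 2 := by
    intro ε hε
    set B := umax ^ 2 * (T * ε + S / ε) / 2 with hBdef
    have hB0 : 0 ≤ B := by
      rw [hBdef]; positivity
    rcases eq_or_ne (φ t) 0 with h0 | h0
    · rw [h0, norm_zero]
      have : 0 ≤ 2 * T * B ^ 2 := by positivity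
      nlinarith
    · set X := ‖φ t‖ with hX
      have hX0 : 0 < X := norm_pos_iff.mpr h0
      set w : EuclideanSpace ℝ (Fin n) := X⁻¹ • φ t with hw
      have hw1 : ‖w‖ = 1 := by
        rw [hw, norm_smul, norm_inv, norm_norm, ← hX, inv_mul_cancel₀ hX0.ne']
      have hPE := hPElow w hw1 t ht
      -- α X² ≤ ∫ ⟪u, φ t⟫²
      have hx2 : α * X ^ 2 ≤ ∫ s in t..(t + T), ⟪u s, φ t⟫ ^ 2 := by
        have heq : ∀ s : ℝ, ⟪u s, φ t⟫ ^ 2 = X ^ 2 * ⟪u s, w⟫ ^ 2 := by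
          intro s
          rw [hw, real_inner_smul_right]
          field_simp
        have : (∫ s in t..(t + T), ⟪u s, φ t⟫ ^ 2)
            = X ^ 2 * ∫ s in t..(t + T), ⟪u s, w⟫ ^ 2 := by
          rw [← intervalIntegral.integral_const_mul]
          apply intervalIntegral.integral_congr
          intro s _; exact heq s
        rw [this]
        have := mul_le_mul_of_nonneg_left hPE (sq_nonneg X)
        calc α * X ^ 2 = X ^ 2 * α := by ring
          _ ≤ X ^ 2 * ∫ s in t..(t + T), ⟪u s, w⟫ ^ 2 := this
      -- ∫ ⟪u, φ t⟫² ≤ 2 S + 2 T B²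
      have hup : (∫ s in t..(t + T), ⟪u s, φ t⟫ ^ 2)
          ≤ ∫ s in t..(t + T), (2 * ⟪u s, φ s⟫ ^ 2 + 2 * B ^ 2) := by
        apply intervalIntegral.integral_mono_on (by linarith)
        · exact aux_sq_int u t₀ T α hα hPElow (φ t) t ht
        · exact (hq2.const_mul 2).add intervalIntegrable_const
        · intro s hs
          have hst₀ : t₀ ≤ s := le_trans ht hs.1
          have hdisp := aux_disp u t₀ T α umax hT hα humax hbound hPElow φ hφ t ht s hs ε hε
          have hb : |⟪u s, φ s - φ t⟫| ≤ B := by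
            calc |⟪u s, φ s - φ t⟫| ≤ ‖u s‖ * ‖φ s - φ t‖ := abs_real_inner_le_norm _ _
              _ ≤ umax * (umax * (T * ε + S / ε) / 2) := by
                  apply mul_le_mul (hbound s hst₀) hdisp (norm_nonneg _) humax.le
              _ = B := by rw [hBdef]; ring
          have hsplit : ⟪u s, φ t⟫ = ⟪u s, φ s⟫ - ⟪u s, φ s - φ t⟫ := by
            rw [inner_sub_right]; ring
          rw [hsplit]
          nlinarith [sq_abs ⟪u s, φ s - φ t⟫, sq_nonneg (⟪u s, φ s⟫ + ⟪u s, φ s - φ t⟫),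
            abs_nonneg ⟪u s, φ s - φ t⟫]
      have hval : (∫ s in t..(t + T), (2 * ⟪u s, φ s⟫ ^ 2 + 2 * B ^ 2))
          = 2 * S + 2 * B ^ 2 * T := by
        rw [intervalIntegral.integral_add (hq2.const_mul 2) intervalIntegrable_const,
          intervalIntegral.integral_const_mul, intervalIntegral.integral_const]
        rw [← hSdef]
        simp [smul_eq_mul]; ring
      have : α * X ^ 2 ≤ 2 * S + 2 * B ^ 2 * T := by
        calc α * X ^ 2 ≤ _ := hx2
          _ ≤ _ := hup
          _ = 2 * S + 2 * B ^ 2 * T := hval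
      linarith [this]
  rcases eq_or_lt_of_le hS0 with hSz | hSpos
  · -- S = 0 : show φ t = 0
    have hz : α * ‖φ t‖ ^ 2 ≤ 0 := by
      by_contra hcon
      push_neg at hcon
      set ε : ℝ := Real.sqrt (α * ‖φ t‖ ^ 2 / (umax ^ 4 * T ^ 3)) / 2 with hεdef
      have hεpos : 0 < ε := by
        rw [hεdef]
        have : 0 < α * ‖φ t‖ ^ 2 / (umax ^ 4 * T ^ 3) := by positivity
        positivity
      have hε2 : ε ^ 2 = α * ‖φ t‖ ^ 2 / (umax ^ 4 * T ^ 3) / 4 := by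
        rw [hεdef, div_pow, Real.sq_sqrt (by positivity)]
        norm_num
      have hk := key ε hεpos
      rw [← hSz] at hk
      have hexp : 2 * 0 + 2 * T * (umax ^ 2 * (T * ε + 0 / ε) / 2) ^ 2
          = umax ^ 4 * T ^ 3 / 2 * ε ^ 2 := by
        field_simp; ring
      rw [hexp, hε2] at hk
      have heval : umax ^ 4 * T ^ 3 / 2 * (α * ‖φ t‖ ^ 2 / (umax ^ 4 * T ^ 3) / 4)
          = α * ‖φ t‖ ^ 2 / 8 := by
        field_simp
        ring
      rw [heval] at hk
      linarith
    have hn : ‖φ t‖ ^ 2 = 0 := by nlinarith [sq_nonneg ‖φ t‖]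
    rw [hn, ← hSz]
    simp
  · -- S > 0 : optimal ε
    set ε : ℝ := Real.sqrt (S / T) with hεdef
    have hεpos : 0 < ε := by
      rw [hεdef]
      exact Real.sqrt_pos.mpr (by positivity)
    have hTε : T * ε ^ 2 = S := by
      rw [hεdef, Real.sq_sqrt (by positivity)]
      field_simp
    have hk := key ε hεpos
    have hsq : (T * ε + S / ε) ^ 2 = 4 * T * S := by
      rw [← hTε]
      field_simp
      ring
    have hexp : 2 * T * (umax ^ 2 * (T * ε + S / ε) / 2) ^ 2
        = 2 * umax ^ 4 * T ^ 2 * S := by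
      rw [div_pow, mul_pow, hsq]
      ring
    rw [hexp] at hk
    linarith
lemma aux_gderiv {n : ℕ} (u : ℝ → EuclideanSpace ℝ (Fin n))
    (φ : ℝ → EuclideanSpace ℝ (Fin n)) (s : ℝ)
    (h : HasDerivAt φ (-(⟪u s, φ s⟫ • u s)) s) :
    HasDerivAt (fun τ => ⟪φ τ, φ τ⟫) (-2 * ⟪u s, φ s⟫ ^ 2) s := by
  have h1 := h.inner ℝ h
  have heq : ⟪φ s, -(⟪u s, φ s⟫ • u s)⟫ + ⟪-(⟪u s, φ s⟫ • u s), φ s⟫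
      = -2 * ⟪u s, φ s⟫ ^ 2 := by
    rw [inner_neg_right, inner_neg_left, real_inner_smul_right, real_inner_smul_left,
      real_inner_comm (φ s) (u s)]
    ring
  rw [heq] at h1
  exact h1

lemma aux_dec {n : ℕ} (u : ℝ → EuclideanSpace ℝ (Fin n)) (t₀ T α umax : ℝ)
    (hT : 0 < T) (hα : 0 < α) (humax : 0 < umax)
    (hbound : ∀ t, t₀ ≤ t → ‖u t‖ ≤ umax)
    (hPElow : ∀ w : EuclideanSpace ℝ (Fin n), ‖w‖ = 1 → ∀ t, t₀ ≤ t →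
      α ≤ ∫ τ in t..(t + T), ⟪u τ, w⟫ ^ 2)
    (φ : ℝ → EuclideanSpace ℝ (Fin n))
    (hφ : ∀ t, t₀ ≤ t → HasDerivAt φ (-(⟪u t, φ t⟫ • u t)) t)
    (t : ℝ) (ht : t₀ ≤ t) :
    ‖φ (t + T)‖ ^ 2 ≤ max (1/2) (1 - α / (1 + umax ^ 4 * T ^ 2)) * ‖φ t‖ ^ 2 := by
  set M := umax ^ 4 * T ^ 2 with hM
  have hM0 : 0 ≤ M := by positivity
  have h1M : (0:ℝ) < 1 + M := by linarith
  set S := ∫ s in t..(t + T), ⟪u s, φ s⟫ ^ 2 with hSdef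
  have hIci : Set.uIcc t (t + T) ⊆ Set.Ici t₀ := by
    rw [Set.uIcc_of_le (by linarith)]
    intro s hs; exact le_trans ht hs.1
  have hφc : ContinuousOn φ (Set.uIcc t (t + T)) := fun s hs =>
    ((hφ s (hIci hs)).continuousAt).continuousWithinAt
  have hq2 : IntervalIntegrable (fun s => ⟪u s, φ s⟫ ^ 2) volume t (t + T) := by
    have := aux_mix_int u t₀ T α hα hPElow φ φ t ht hφc hφc
    apply this.congr
    intro s _; dsimp only; rw [sq]
  have hFTC : ∫ s in t..(t + T), (-2 * ⟪u s, φ s⟫ ^ 2)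
      = ⟪φ (t + T), φ (t + T)⟫ - ⟪φ t, φ t⟫ := by
    exact intervalIntegral.integral_eq_sub_of_hasDerivAt
      (f := fun τ => ⟪φ τ, φ τ⟫) (f' := fun s => -2 * ⟪u s, φ s⟫ ^ 2)
      (fun s hs => aux_gderiv u φ s (hφ s (hIci hs))) (hq2.const_mul (-2))
  have hval : (∫ s in t..(t + T), (-2 * ⟪u s, φ s⟫ ^ 2)) = -2 * S := by
    rw [intervalIntegral.integral_const_mul, ← hSdef]
  have hgg : ‖φ (t + T)‖ ^ 2 = ‖φ t‖ ^ 2 - 2 * S := by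
    have := hFTC
    rw [hval, real_inner_self_eq_norm_sq, real_inner_self_eq_norm_sq] at this
    linarith
  have hwin := aux_window u t₀ T α umax hT hα humax hbound hPElow φ hφ t ht
  rw [← hSdef, ← hM] at hwin
  set X := ‖φ t‖ with hX
  set r := max (1/2 : ℝ) (1 - α / (1 + M)) with hr
  have hr2 : 1 - α / (1 + M) ≤ r := le_max_right _ _
  have e1 : α * X ^ 2 / (1 + M) ≤ 2 * S := by
    rw [div_le_iff₀ h1M]
    nlinarith [hwin]
  have e2 : X ^ 2 - α * X ^ 2 / (1 + M) = (1 - α / (1 + M)) * X ^ 2 := by ring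
  have e3 : (1 - α / (1 + M)) * X ^ 2 ≤ r * X ^ 2 :=
    mul_le_mul_of_nonneg_right hr2 (sq_nonneg X)
  rw [hgg]
  linarith

/-- for φ̇ = −u uᵀ φ with u bounded and persistently exciting
(with lower bound α and upper bound β on the excitation integral),
the origin is exponentially stable in the large. -/
theorem pe_implies_esl {n : ℕ}
    (u : ℝ → EuclideanSpace ℝ (Fin n)) (t₀ T α β umax : ℝ)
    (hT : 0 < T) (hα : 0 < α) (hαβ : α ≤ β) (humax : 0 < umax)
    (hbound : ∀ t, t₀ ≤ t → ‖u t‖ ≤ umax)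
    (hPElow : ∀ w : EuclideanSpace ℝ (Fin n), ‖w‖ = 1 → ∀ t, t₀ ≤ t →
      α ≤ ∫ τ in t..(t + T), ⟪u τ, w⟫ ^ 2)
    (hPEhigh : ∀ w : EuclideanSpace ℝ (Fin n), ‖w‖ = 1 → ∀ t, t₀ ≤ t →
      (∫ τ in t..(t + T), ⟪u τ, w⟫ ^ 2) ≤ β) :
    ∃ κ ν : ℝ, 0 < κ ∧ 0 < ν ∧
      ∀ φ : ℝ → EuclideanSpace ℝ (Fin n),
        (∀ t, t₀ ≤ t → HasDerivAt φ (-(⟪u t, φ t⟫ • u t)) t) →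
        ∀ t, t₀ ≤ t → ‖φ t‖ ≤ κ * ‖φ t₀‖ * Real.exp (-ν * (t - t₀)) := by
  set M := umax ^ 4 * T ^ 2 with hM
  have hM0 : 0 ≤ M := by positivity
  have h1M : (0:ℝ) < 1 + M := by linarith
  set r := max (1/2 : ℝ) (1 - α / (1 + M)) with hr
  have hr0 : (0:ℝ) < r := lt_of_lt_of_le (by norm_num) (le_max_left _ _)
  have hr1 : r < 1 := by
    apply max_lt (by norm_num)
    have : 0 < α / (1 + M) := by positivity
    linarith
  have hlog : Real.log r < 0 := Real.log_neg hr0 hr1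
  refine ⟨(Real.sqrt r)⁻¹, -(Real.log r) / (2 * T), ?_, ?_, ?_⟩
  · have : 0 < Real.sqrt r := Real.sqrt_pos.mpr hr0
    positivity
  · apply div_pos (by linarith) (by linarith)
  · intro φ hφ t ht
    -- monotonicity of the squared norm
    have hanti : ∀ a b, t₀ ≤ a → a ≤ b → ‖φ b‖ ^ 2 ≤ ‖φ a‖ ^ 2 := by
      intro a b ha hab
      have hAnti : AntitoneOn (fun s => ⟪φ s, φ s⟫) (Set.Ici t₀) := by
        apply antitoneOn_of_deriv_nonpos (convex_Ici t₀)
        · intro s hs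
          exact ((aux_gderiv u φ s (hφ s hs)).continuousAt).continuousWithinAt
        · intro s hs
          rw [interior_Ici] at hs
          exact ((aux_gderiv u φ s (hφ s hs.le)).differentiableAt).differentiableWithinAt
        · intro s hs
          rw [interior_Ici] at hs
          rw [(aux_gderiv u φ s (hφ s hs.le)).deriv]
          nlinarith [sq_nonneg ⟪u s, φ s⟫]
      have := hAnti (Set.mem_Ici.mpr ha) (Set.mem_Ici.mpr (le_trans ha hab)) hab
      simpa only [real_inner_self_eq_norm_sq] using this
    -- iteration
    have hiter : ∀ k : ℕ, ‖φ (t₀ + k * T)‖ ^ 2 ≤ r ^ k * ‖φ t₀‖ ^ 2 := by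
      intro k
      induction k with
      | zero => simp
      | succ k ih =>
        have hk0 : t₀ ≤ t₀ + k * T := by
          have : (0:ℝ) ≤ k * T := by positivity
          linarith
        have hdec := aux_dec u t₀ T α umax hT hα humax hbound hPElow φ hφ (t₀ + k * T) hk0
        rw [← hM, ← hr] at hdec
        have harg : t₀ + ((k:ℝ) + 1) * T = (t₀ + k * T) + T := by ring
        push_cast
        rw [harg]
        calc ‖φ (t₀ + ↑k * T + T)‖ ^ 2 ≤ r * ‖φ (t₀ + ↑k * T)‖ ^ 2 := hdec
          _ ≤ r * (r ^ k * ‖φ t₀‖ ^ 2) := mul_le_mul_of_nonneg_left ih hr0.le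
          _ = r ^ (k + 1) * ‖φ t₀‖ ^ 2 := by ring
    -- pick k = floor
    set k : ℕ := ⌊(t - t₀) / T⌋₊ with hk
    have htt0 : 0 ≤ (t - t₀) / T := by
      apply div_nonneg (by linarith) hT.le
    have hk1 : (k:ℝ) ≤ (t - t₀) / T := Nat.floor_le htt0
    have hk2 : (t - t₀) / T < k + 1 := Nat.lt_floor_add_one _
    have hkT : (k:ℝ) * T ≤ t - t₀ := by
      rw [← le_div_iff₀ hT]; exact hk1
    have ht₀k : t₀ + k * T ≤ t := by linarith
    have hstep1 : ‖φ t‖ ^ 2 ≤ r ^ k * ‖φ t₀‖ ^ 2 := by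
      calc ‖φ t‖ ^ 2 ≤ ‖φ (t₀ + k * T)‖ ^ 2 := by
            exact hanti _ _ (by nlinarith [mul_nonneg (Nat.cast_nonneg k : (0:ℝ) ≤ k) hT.le]) ht₀k
        _ ≤ r ^ k * ‖φ t₀‖ ^ 2 := hiter k
    -- r^k ≤ r⁻¹ * exp((t-t₀)/T * log r)
    have hrk : r ^ k ≤ r⁻¹ * Real.exp ((t - t₀) / T * Real.log r) := by
      have e1 : r ^ k = Real.exp ((k:ℝ) * Real.log r) := by
        rw [Real.exp_nat_mul, Real.exp_log hr0]
      have e2 : (k:ℝ) * Real.log r ≤ ((t - t₀) / T - 1) * Real.log r := by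
        apply mul_le_mul_of_nonpos_right (by linarith) hlog.le
      have e3 : Real.exp (((t - t₀) / T - 1) * Real.log r)
          = r⁻¹ * Real.exp ((t - t₀) / T * Real.log r) := by
        rw [show ((t - t₀) / T - 1) * Real.log r
          = -Real.log r + (t - t₀) / T * Real.log r by ring, Real.exp_add,
          Real.exp_neg, Real.exp_log hr0]
      rw [e1, ← e3]
      exact Real.exp_le_exp.mpr e2
    -- conclude
    set ν := -(Real.log r) / (2 * T) with hν
    have hexpeq : (t - t₀) / T * Real.log r = 2 * (-ν * (t - t₀)) := by
      rw [hν]; field_simp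
    have hsq : ‖φ t‖ ^ 2 ≤ ((Real.sqrt r)⁻¹ * ‖φ t₀‖ * Real.exp (-ν * (t - t₀))) ^ 2 := by
      have hRHS : ((Real.sqrt r)⁻¹ * ‖φ t₀‖ * Real.exp (-ν * (t - t₀))) ^ 2
          = r⁻¹ * Real.exp ((t - t₀) / T * Real.log r) * ‖φ t₀‖ ^ 2 := by
        rw [mul_pow, mul_pow, inv_pow, Real.sq_sqrt hr0.le, hexpeq, ← Real.exp_nat_mul]
        push_cast
        ring_nf
      rw [hRHS]
      calc ‖φ t‖ ^ 2 ≤ r ^ k * ‖φ t₀‖ ^ 2 := hstep1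
        _ ≤ r⁻¹ * Real.exp ((t - t₀) / T * Real.log r) * ‖φ t₀‖ ^ 2 :=
            mul_le_mul_of_nonneg_right hrk (sq_nonneg _)
    have hRHS0 : 0 ≤ (Real.sqrt r)⁻¹ * ‖φ t₀‖ * Real.exp (-ν * (t - t₀)) := by
      have : 0 < Real.sqrt r := Real.sqrt_pos.mpr hr0
      positivity
    calc ‖φ t‖ = Real.sqrt (‖φ t‖ ^ 2) := (Real.sqrt_sq (norm_nonneg _)).symm
      _ ≤ Real.sqrt (((Real.sqrt r)⁻¹ * ‖φ t₀‖ * Real.exp (-ν * (t - t₀))) ^ 2) :=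
          Real.sqrt_le_sqrt hsq
      _ = (Real.sqrt r)⁻¹ * ‖φ t₀‖ * Real.exp (-ν * (t - t₀)) := Real.sqrt_sq hRHS0
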